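/- The Black-Scholes call and put price functions satisfy the Black-Scholes partial differential equation: for all S, K, θ, σ > 0, ∂c_BS/∂θ (S,K,θ,σ) = (1/2)·σ²·S²·∂²c_BS/∂S² (S,K,θ,σ), and the same identity holds with c_BS replaced by p_BS. -/

import Mathlib

open MeasureTheory Real Filter

/-- The standard normal density. -/
noncomputable def stdNormalPDF (x : ℝ) : ℝ :=
  (Real.sqrt (2 * Real.pi))⁻¹ * Real.exp (-(x ^ 2) / 2)

/-- The standard normal cumulative distribution function. -/
noncomputable def stdNormalCDF (x : ℝ) : ℝ :=
  ∫ t in Set.Iic x, stdNormalPDF t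

/-- `d₁ = log(S/K)/(σ√θ) + σ√θ/2`. -/
noncomputable def d1 (S K θ σ : ℝ) : ℝ :=
  Real.log (S / K) / (σ * Real.sqrt θ) + σ * Real.sqrt θ / 2

/-- `d₂ = d₁ − σ√θ`. -/
noncomputable def d2 (S K θ σ : ℝ) : ℝ :=
  d1 S K θ σ - σ * Real.sqrt θ

/-- Black-Scholes call price `c_BS(S,K,θ,σ) = S·Φ(d₁) − K·Φ(d₂)`. -/
noncomputable def cBS (S K θ σ : ℝ) : ℝ :=
  S * stdNormalCDF (d1 S K θ σ) - K * stdNormalCDF (d2 S K θ σ)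

/-- Black-Scholes put price `p_BS(S,K,θ,σ) = K·Φ(−d₂) − S·Φ(−d₁)`. -/
noncomputable def pBS (S K θ σ : ℝ) : ℝ :=
  K * stdNormalCDF (-(d2 S K θ σ)) - S * stdNormalCDF (-(d1 S K θ σ))


lemma stdNormalPDF_cont : Continuous stdNormalPDF := by
  unfold stdNormalPDF; fun_prop

lemma stdNormalPDF_integrable : Integrable stdNormalPDF := by
  have h : Integrable (fun x : ℝ => Real.exp (-(1/2 : ℝ) * x ^ 2)) :=
    integrable_exp_neg_mul_sq (by norm_num)
  have h2 := h.const_mul (Real.sqrt (2 * Real.pi))⁻¹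
  refine h2.congr (Filter.Eventually.of_forall fun x => ?_)
  unfold stdNormalPDF; ring_nf

lemma stdNormalPDF_total : ∫ x, stdNormalPDF x = 1 := by
  have h : ∫ x : ℝ, Real.exp (-(1/2 : ℝ) * x ^ 2) = Real.sqrt (Real.pi / (1/2)) :=
    integral_gaussian (1/2)
  have he : ∀ x : ℝ, stdNormalPDF x = (Real.sqrt (2 * Real.pi))⁻¹ * Real.exp (-(1/2 : ℝ) * x ^ 2) := by
    intro x; unfold stdNormalPDF; ring_nf
  rw [show (fun x => stdNormalPDF x) = fun x => (Real.sqrt (2 * Real.pi))⁻¹ * Real.exp (-(1/2 : ℝ) * x ^ 2) from funext he]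
  rw [integral_const_mul, h]
  rw [show Real.pi / (1/2) = 2 * Real.pi by ring]
  rw [inv_mul_cancel₀]
  positivity

lemma hasDerivAt_stdNormalCDF (x : ℝ) : HasDerivAt stdNormalCDF (stdNormalPDF x) x := by
  have key : ∀ y : ℝ, stdNormalCDF y
      = (∫ t in Set.Iic (0:ℝ), stdNormalPDF t) + ∫ t in (0:ℝ)..y, stdNormalPDF t := by
    intro y
    rw [← intervalIntegral.integral_Iic_sub_Iic (stdNormalPDF_integrable.integrableOn)
      (stdNormalPDF_integrable.integrableOn)]
    unfold stdNormalCDF; ring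
  rw [show stdNormalCDF = fun y => (∫ t in Set.Iic (0:ℝ), stdNormalPDF t)
      + ∫ t in (0:ℝ)..y, stdNormalPDF t from funext key]
  exact (intervalIntegral.integral_hasDerivAt_right
    (stdNormalPDF_integrable.intervalIntegrable)
    (stdNormalPDF_cont.stronglyMeasurableAtFilter _ _)
    stdNormalPDF_cont.continuousAt).const_add _

lemma stdNormalCDF_neg (x : ℝ) : stdNormalCDF (-x) = 1 - stdNormalCDF x := by
  have h1 : stdNormalCDF (-x) = ∫ t in Set.Ioi x, stdNormalPDF t := by
    unfold stdNormalCDF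
    rw [show (∫ t in Set.Iic (-x), stdNormalPDF t) = ∫ t in Set.Iic (-x), stdNormalPDF (-t) from
      integral_congr_ae (Filter.Eventually.of_forall fun t => by simp [stdNormalPDF]) ]
    rw [integral_comp_neg_Iic, neg_neg]
  have h2 := intervalIntegral.integral_Iic_add_Ioi (b := x)
    stdNormalPDF_integrable.integrableOn stdNormalPDF_integrable.integrableOn
  rw [stdNormalPDF_total] at h2
  rw [h1, show stdNormalCDF x = ∫ t in Set.Iic x, stdNormalPDF t from rfl]
  linarith

lemma key_identity (S K θ σ : ℝ) (hS : 0 < S) (hK : 0 < K) (hθ : 0 < θ) (hσ : 0 < σ) :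
    S * stdNormalPDF (d1 S K θ σ) = K * stdNormalPDF (d2 S K θ σ) := by
  have ha : σ * Real.sqrt θ ≠ 0 := by positivity
  unfold stdNormalPDF d2 d1
  set a := σ * Real.sqrt θ with ha'
  set L := Real.log (S / K) with hL'
  have hL : L = Real.log S - Real.log K := Real.log_div hS.ne' hK.ne'
  have main : Real.log S + -((L/a + a/2)^2)/2 = Real.log K + -((L/a + a/2 - a)^2)/2 := by
    rw [hL]; field_simp; ring
  calc S * ((Real.sqrt (2*Real.pi))⁻¹ * Real.exp (-((L/a + a/2)^2)/2))
      = (Real.sqrt (2*Real.pi))⁻¹ * Real.exp (Real.log S + -((L/a + a/2)^2)/2) := by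
        rw [Real.exp_add, Real.exp_log hS]; ring
    _ = (Real.sqrt (2*Real.pi))⁻¹ * Real.exp (Real.log K + -((L/a + a/2 - a)^2)/2) := by
        rw [main]
    _ = K * ((Real.sqrt (2*Real.pi))⁻¹ * Real.exp (-((L/a + a/2 - a)^2)/2)) := by
        rw [Real.exp_add, Real.exp_log hK]; ring

lemma pBS_eq (S K θ σ : ℝ) : pBS S K θ σ = cBS S K θ σ + K - S := by
  unfold pBS cBS
  rw [stdNormalCDF_neg, stdNormalCDF_neg]; ring

lemma hasDerivAt_d1_S (K θ σ : ℝ) (hK : 0 < K) (hθ : 0 < θ) (hσ : 0 < σ)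
    (s : ℝ) (hs : 0 < s) :
    HasDerivAt (fun s' => d1 s' K θ σ) (1 / (s * (σ * Real.sqrt θ))) s := by
  have ha : (0:ℝ) < σ * Real.sqrt θ := by positivity
  have h0 : HasDerivAt (fun s' : ℝ => s' / K) (1/K) s := (hasDerivAt_id s).div_const K
  have h1 : HasDerivAt (fun s' : ℝ => Real.log (s'/K)) ((s/K)⁻¹ * (1/K)) s :=
    (Real.hasDerivAt_log (by positivity)).comp s h0
  have h2 := (h1.div_const (σ * Real.sqrt θ)).add_const (σ * Real.sqrt θ / 2)
  have he : (fun s' => d1 s' K θ σ) = fun x => Real.log (x / K) / (σ * Real.sqrt θ) + σ * Real.sqrt θ / 2 := by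
    funext s'; simp [d1]
  rw [he]
  convert h2 using 1
  · rfl
  · rfl
  field_simp

lemma hasDerivAt_cBS_S (K θ σ : ℝ) (hK : 0 < K) (hθ : 0 < θ) (hσ : 0 < σ)
    (s : ℝ) (hs : 0 < s) :
    HasDerivAt (fun s' => cBS s' K θ σ) (stdNormalCDF (d1 s K θ σ)) s := by
  have hd1 := hasDerivAt_d1_S K θ σ hK hθ hσ s hs
  have hd2 : HasDerivAt (fun s' => d2 s' K θ σ) (1 / (s * (σ * Real.sqrt θ))) s := by
    simpa [d2] using hd1.sub_const (σ * Real.sqrt θ)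
  have hΦ1 : HasDerivAt (fun s' => stdNormalCDF (d1 s' K θ σ))
      (stdNormalPDF (d1 s K θ σ) * (1 / (s * (σ * Real.sqrt θ)))) s :=
    by exact (hasDerivAt_stdNormalCDF (d1 s K θ σ)).comp s hd1
  have hΦ2 : HasDerivAt (fun s' => stdNormalCDF (d2 s' K θ σ))
      (stdNormalPDF (d2 s K θ σ) * (1 / (s * (σ * Real.sqrt θ)))) s :=
    by exact (hasDerivAt_stdNormalCDF (d2 s K θ σ)).comp s hd2
  have h := ((hasDerivAt_id s).mul hΦ1).sub (hΦ2.const_mul K)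
  have key := key_identity s K θ σ hs hK hθ hσ
  convert h using 1
  · rfl
  · rfl
  · rfl
  simp only [id_eq]
  linear_combination (-(1 / (s * (σ * Real.sqrt θ)))) * key

lemma hasDerivAt_pBS_S (K θ σ : ℝ) (hK : 0 < K) (hθ : 0 < θ) (hσ : 0 < σ)
    (s : ℝ) (hs : 0 < s) :
    HasDerivAt (fun s' => pBS s' K θ σ) (stdNormalCDF (d1 s K θ σ) - 1) s := by
  have h := ((hasDerivAt_cBS_S K θ σ hK hθ hσ s hs).add_const K).sub (hasDerivAt_id s)
  convert h using 1
  · rfl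
  · rfl
  funext s'; rw [pBS_eq]; simp

lemma hasDerivAt_d1_θ (S K σ : ℝ) (hS : 0 < S) (hK : 0 < K) (hσ : 0 < σ)
    (t : ℝ) (ht : 0 < t) :
    HasDerivAt (fun t' => d1 S K t' σ)
      (σ / (4 * Real.sqrt t) - Real.log (S / K) / (2 * σ * t * Real.sqrt t)) t := by
  have hst : (0:ℝ) < Real.sqrt t := Real.sqrt_pos.2 ht
  have hsq : HasDerivAt Real.sqrt (1/(2*Real.sqrt t)) t := Real.hasDerivAt_sqrt ht.ne'
  have hr : HasDerivAt (fun t' => σ * Real.sqrt t') (σ * (1/(2*Real.sqrt t))) t := hsq.const_mul σ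
  have ha : σ * Real.sqrt t ≠ 0 := by positivity
  have h1 := ((hasDerivAt_const t (Real.log (S/K))).div hr ha).add (hr.div_const 2)
  have he : (fun t' => d1 S K t' σ) = fun x => Real.log (S / K) / (σ * Real.sqrt x) + σ * Real.sqrt x / 2 := by
    funext t'; simp [d1]
  rw [he]
  convert h1 using 1
  · rfl
  · rfl
  · rfl
  have h2 : Real.sqrt t ^ 2 = t := Real.sq_sqrt ht.le
  rw [mul_pow, h2]
  field_simp
  ring

lemma hasDerivAt_cBS_θ (S K σ : ℝ) (hS : 0 < S) (hK : 0 < K) (hσ : 0 < σ)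
    (t : ℝ) (ht : 0 < t) :
    HasDerivAt (fun t' => cBS S K t' σ)
      (S * stdNormalPDF (d1 S K t σ) * (σ / (2 * Real.sqrt t))) t := by
  have hst : (0:ℝ) < Real.sqrt t := Real.sqrt_pos.2 ht
  have hd1 := hasDerivAt_d1_θ S K σ hS hK hσ t ht
  have hsq : HasDerivAt Real.sqrt (1/(2*Real.sqrt t)) t := Real.hasDerivAt_sqrt ht.ne'
  have hr : HasDerivAt (fun t' => σ * Real.sqrt t') (σ * (1/(2*Real.sqrt t))) t := hsq.const_mul σ
  have hd2 : HasDerivAt (fun t' => d2 S K t' σ)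
      ((σ / (4 * Real.sqrt t) - Real.log (S / K) / (2 * σ * t * Real.sqrt t))
        - σ * (1/(2*Real.sqrt t))) t := by
    exact hd1.sub hr
  have hΦ1 := (hasDerivAt_stdNormalCDF (d1 S K t σ)).comp t hd1
  have hΦ2 := (hasDerivAt_stdNormalCDF (d2 S K t σ)).comp t hd2
  have h := (hΦ1.const_mul S).sub (hΦ2.const_mul K)
  have key := key_identity S K t σ hS hK ht hσ
  convert h using 1
  · rfl
  · rfl
  · rfl
  linear_combination (σ * (1/(2*Real.sqrt t)) - (σ / (4 * Real.sqrt t)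
    - Real.log (S/K) / (2 * σ * t * Real.sqrt t))) * key

/-- The Black-Scholes call and put price functions satisfy the Black-Scholes PDE:
for all `S, K, θ, σ > 0`, `∂c_BS/∂θ = (1/2)·σ²·S²·∂²c_BS/∂S²`, and likewise for
`p_BS`. -/
theorem blackScholes_pde
    (S K θ σ : ℝ) (hS : 0 < S) (hK : 0 < K) (hθ : 0 < θ) (hσ : 0 < σ) :
    deriv (fun t => cBS S K t σ) θ
        = (1/2) * σ ^ 2 * S ^ 2 * deriv (fun s => deriv (fun s' => cBS s' K θ σ) s) S
      ∧ deriv (fun t => pBS S K t σ) θ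
        = (1/2) * σ ^ 2 * S ^ 2
            * deriv (fun s => deriv (fun s' => pBS s' K θ σ) s) S := by
  have hst : (0:ℝ) < Real.sqrt θ := Real.sqrt_pos.2 hθ
  have hd1S := hasDerivAt_d1_S K θ σ hK hθ hσ S hS
  -- second derivative of call in S
  have evc : deriv (fun s' => cBS s' K θ σ) =ᶠ[nhds S] fun s => stdNormalCDF (d1 s K θ σ) := by
    filter_upwards [eventually_gt_nhds hS] with s hs
    exact (hasDerivAt_cBS_S K θ σ hK hθ hσ s hs).deriv
  have evp : deriv (fun s' => pBS s' K θ σ)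
      =ᶠ[nhds S] fun s => stdNormalCDF (d1 s K θ σ) - 1 := by
    filter_upwards [eventually_gt_nhds hS] with s hs
    exact (hasDerivAt_pBS_S K θ σ hK hθ hσ s hs).deriv
  have hΦ : HasDerivAt (fun s => stdNormalCDF (d1 s K θ σ))
      (stdNormalPDF (d1 S K θ σ) * (1 / (S * (σ * Real.sqrt θ)))) S :=
    by exact (hasDerivAt_stdNormalCDF (d1 S K θ σ)).comp S hd1S
  have h2c : deriv (fun s => deriv (fun s' => cBS s' K θ σ) s) S
      = stdNormalPDF (d1 S K θ σ) * (1 / (S * (σ * Real.sqrt θ))) := by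
    rw [evc.deriv_eq]; exact hΦ.deriv
  have h2p : deriv (fun s => deriv (fun s' => pBS s' K θ σ) s) S
      = stdNormalPDF (d1 S K θ σ) * (1 / (S * (σ * Real.sqrt θ))) := by
    rw [evp.deriv_eq]
    exact (hΦ.sub_const 1).deriv
  have h1c : deriv (fun t => cBS S K t σ)  θ
      = S * stdNormalPDF (d1 S K θ σ) * (σ / (2 * Real.sqrt θ)) :=
    (hasDerivAt_cBS_θ S K σ hS hK hσ θ hθ).deriv
  have h1p : deriv (fun t => pBS S K t σ) θ
      = S * stdNormalPDF (d1 S K θ σ) * (σ / (2 * Real.sqrt θ)) := by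
    have : (fun t => pBS S K t σ) = fun t => cBS S K t σ + (K - S) := by
      funext t; rw [pBS_eq]; ring
    rw [this, deriv_add_const, h1c]
  constructor
  · rw [h1c, h2c]; field_simp
  · rw [h1p, h2p]; field_simp
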